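/- The union over all Penrose model sets Λ_P of the classes 𝓕(Λ_P) of finite subsets of Λ_P is successively determined by three X-rays in ℤ[ζ₅]-directions: there exist a ℤ[ζ₅]-direction u₁ ∈ S¹, a map f₂ assigning to each X-ray function X_{u₁}F a ℤ[ζ₅]-direction u₂ not parallel to u₁, and a map f₃ assigning to each pair of X-ray functions (X_{u₁}F, X_{u₂}F) a ℤ[ζ₅]-direction u₃ not parallel to u₁ or u₂, such that for every finite set F contained in some PMS, with u₂ = f₂(X_{u₁}F) and u₃ = f₃(X_{u₁}F, X_{u₂}F), every finite set F' contained in some PMS with X_{u_j}F' = X_{u_j}F for j = 1, 2, 3 satisfies F' = F. -/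

import Mathlib

open scoped Pointwise

noncomputable section

instance : TopologicalSpace (ZMod 5) := ⊥
instance : DiscreteTopology (ZMod 5) := ⟨rfl⟩

/-- The primitive 5th root of unity ζ₅ = exp(2πi/5). -/
def zeta5 : ℂ := Complex.exp (2 * Real.pi * Complex.I / 5)

/-- The ring of cyclotomic integers ℤ[ζ₅], as the set of ℤ-combinations of 1, ζ₅, ζ₅², ζ₅³. -/
def Zzeta5 : Set ℂ := {z | ∃ a : Fin 4 → ℤ, z = ∑ j : Fin 4, (a j : ℂ) * zeta5 ^ (j : ℕ)}

/-- The (unique) integer coefficients of an element of ℤ[ζ₅] w.r.t. the basis 1, ζ₅, ζ₅², ζ₅³. -/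
def coeffs (z : ℂ) : Fin 4 → ℤ :=
  open Classical in
  if h : z ∈ Zzeta5 then h.choose else 0

/-- The star map z ↦ (σ₂(z), Σ aⱼ(z) mod 5), with σ₂ the Galois automorphism ζ₅ ↦ ζ₅². -/
def starMap (z : ℂ) : ℂ × ZMod 5 :=
  (∑ j : Fin 4, (coeffs z j : ℂ) * zeta5 ^ (2 * (j : ℕ)),
   ∑ j : Fin 4, ((coeffs z j : ℤ) : ZMod 5))

/-- The regular pentagon P: the convex hull of the 5th roots of unity. -/
def pent : Set ℂ := convexHull ℝ {z : ℂ | z ^ 5 = 1}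

/-- The golden ratio τ = (1+√5)/2. -/
def tauR : ℝ := (1 + Real.sqrt 5) / 2

/-- The Penrose window W_P ⊂ ℝ² × ℤ/5ℤ. -/
def WP : Set (ℂ × ZMod 5) :=
  (pent ×ˢ ({1} : Set (ZMod 5))) ∪ ((-pent) ×ˢ ({2} : Set (ZMod 5))) ∪
    ((tauR • pent) ×ˢ ({3} : Set (ZMod 5))) ∪ ((-(tauR • pent)) ×ˢ ({4} : Set (ZMod 5)))

/-- The shifted window W_P^u = (u, 0) + W_P. -/
def WPu (u : ℂ) : Set (ℂ × ZMod 5) := (fun p => ((u, (0 : ZMod 5)) + p)) '' WP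

/-- The model set Λ_P^u = {z ∈ ℤ[ζ₅] : z⋆ ∈ W_P^u}. -/
def LambdaPu (u : ℂ) : Set ℂ := {z | z ∈ Zzeta5 ∧ starMap z ∈ WPu u}

/-- Λ_P^u is generic if the boundary of W_P^u contains no point of ℤ[ζ₅]⋆. -/
def IsGeneric (u : ℂ) : Prop := ∀ z ∈ Zzeta5, starMap z ∉ frontier (WPu u)

/-- A Penrose model set: a translate t + Λ_P^u of a generic Λ_P^u. -/
def IsPMS (Λ : Set ℂ) : Prop := ∃ t u : ℂ, IsGeneric u ∧ Λ = (fun z => t + z) '' LambdaPu u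

/-- v is parallel to u. -/
def Par (u v : ℂ) : Prop := ∃ r : ℝ, r ≠ 0 ∧ v = r • u

/-- A ℤ[ζ₅]-direction: a direction parallel to a nonzero element of ℤ[ζ₅]. -/
def IsZ5Direction (u : ℂ) : Prop := ∃ z ∈ Zzeta5, z ≠ 0 ∧ Par u z

/-- The line through p in direction u. -/
def line (u p : ℂ) : Set ℂ := {x | ∃ t : ℝ, x = p + t • u}

/-- The X-ray of F in direction u, as a function of the base point of the line. -/
def Xray (u : ℂ) (F : Set ℂ) : ℂ → ℕ := fun p => (F ∩ line u p).ncard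

/-- A convex subset C of Λ: a finite subset with C = conv(C) ∩ Λ. -/
def IsConvexSubset (Λ C : Set ℂ) : Prop :=
  C.Finite ∧ C ⊆ Λ ∧ C = convexHull ℝ C ∩ Λ

section Aux

lemma zeta5_eq : zeta5 = Complex.exp ((2 * Real.pi / 5 : ℝ) * Complex.I) := by
  unfold zeta5; congr 1; push_cast; ring

lemma zeta5_im : zeta5.im = Real.sin (2 * Real.pi / 5) := by
  rw [zeta5_eq, Complex.exp_ofReal_mul_I_im]

lemma zeta5_im_ne : zeta5.im ≠ 0 := by
  rw [zeta5_im]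
  have h1 : (0:ℝ) < 2 * Real.pi / 5 := by positivity
  have h2 : 2 * Real.pi / 5 < Real.pi := by nlinarith [Real.pi_pos]
  exact ne_of_gt (Real.sin_pos_of_pos_of_lt_pi h1 h2)

lemma zeta5_ne_zero : zeta5 ≠ 0 := by
  intro h; exact zeta5_im_ne (by rw [h]; simp)

lemma norm_zeta5 : ‖zeta5‖ = 1 := by
  rw [zeta5_eq, Complex.norm_exp_ofReal_mul_I]

lemma par_symm {u v : ℂ} (h : Par u v) : Par v u := by
  obtain ⟨r, hr, rfl⟩ := h
  exact ⟨r⁻¹, inv_ne_zero hr, by rw [smul_smul, inv_mul_cancel₀ hr, one_smul]⟩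

lemma par_trans {u v w : ℂ} (h1 : Par u v) (h2 : Par v w) : Par u w := by
  obtain ⟨r, hr, rfl⟩ := h1
  obtain ⟨s, hs, rfl⟩ := h2
  exact ⟨s * r, mul_ne_zero hs hr, smul_smul s r u⟩

lemma not_par_one_zeta5 : ¬ Par 1 zeta5 := by
  rintro ⟨r, hr, h⟩
  apply zeta5_im_ne
  rw [h, Complex.smul_im]; simp

lemma mem_line_self (u p : ℂ) : p ∈ line u p := ⟨0, by simp⟩

lemma line_symm {u p x : ℂ} (h : x ∈ line u p) : p ∈ line u x := by
  obtain ⟨t, rfl⟩ := h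
  refine ⟨-t, ?_⟩
  rw [neg_smul, add_assoc, add_neg_cancel, add_zero]

lemma xray_ne_zero_iff {F : Set ℂ} (hF : F.Finite) (u p : ℂ) :
    Xray u F p ≠ 0 ↔ ∃ x ∈ F, x ∈ line u p := by
  unfold Xray
  constructor
  · intro h
    obtain ⟨x, hx⟩ := Set.nonempty_of_ncard_ne_zero h
    exact ⟨x, hx.1, hx.2⟩
  · rintro ⟨x, hxF, hxl⟩
    exact (Set.ncard_pos (hF.inter_of_left _)).mpr ⟨x, hxF, hxl⟩ |>.ne'

lemma line_inter_subsingleton {u v : ℂ} (hu : u ≠ 0) (huv : ¬ Par u v) (x y : ℂ) :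
    (line u x ∩ line v y).Subsingleton := by
  rintro p ⟨⟨a, ha⟩, ⟨b, hb⟩⟩ q ⟨⟨c, hc⟩, ⟨d, hd⟩⟩
  by_cases hac : a = c
  · rw [ha, hc, hac]
  · exfalso
    apply huv
    rw [Complex.real_smul] at ha hb hc hd
    have key : ((a : ℂ) - c) * u = ((b : ℂ) - d) * v := by
      have e1 : p - q = ((a : ℂ) - c) * u := by rw [ha, hc]; ring
      have e2 : p - q = ((b : ℂ) - d) * v := by rw [hb, hd]; ring
      rw [← e1, ← e2]
    have hac' : ((a : ℂ) - c) ≠ 0 := by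
      simpa [sub_eq_zero] using fun h => hac (by exact_mod_cast h)
    have hbd : ((b : ℂ) - d) ≠ 0 := by
      intro h
      exact mul_ne_zero hac' hu (key.trans (by rw [h, zero_mul]))
    have hbd' : b - d ≠ 0 := by
      intro h
      apply hbd
      have h2 : (b : ℂ) = (d : ℂ) := by exact_mod_cast congrArg (fun t : ℝ => (t : ℂ)) (sub_eq_zero.mp h)
      rw [h2, sub_self]
    refine ⟨(a - c) / (b - d), div_ne_zero (sub_ne_zero.mpr hac) hbd', ?_⟩
    rw [Complex.real_smul]
    push_cast
    rw [div_mul_eq_mul_div, eq_div_iff hbd]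
    linear_combination -key

/-- candidate ℤ[ζ₅]-directions -/
noncomputable def cand (n : ℕ) : ℂ := (‖(n : ℂ) + zeta5‖⁻¹ : ℝ) • ((n : ℂ) + zeta5)

lemma znz (n : ℕ) : (n : ℂ) + zeta5 ≠ 0 := by
  intro h
  have := congrArg Complex.im h
  simp at this
  exact zeta5_im_ne this

lemma z_eq (n : ℕ) : ((n : ℂ) + zeta5) = ‖(n : ℂ) + zeta5‖ • cand n := by
  unfold cand
  rw [smul_smul, mul_inv_cancel₀ (norm_ne_zero_iff.mpr (znz n)), one_smul]

lemma norm_cand (n : ℕ) : ‖cand n‖ = 1 := by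
  unfold cand
  rw [norm_smul, Real.norm_eq_abs, abs_of_nonneg (by positivity),
    inv_mul_cancel₀ (norm_ne_zero_iff.mpr (znz n))]

lemma isZ5_cand (n : ℕ) : IsZ5Direction (cand n) := by
  refine ⟨(n : ℂ) + zeta5, ⟨![(n : ℤ), 1, 0, 0], ?_⟩, znz n, ?_⟩
  · simp [Fin.sum_univ_four]
  · exact ⟨‖(n : ℂ) + zeta5‖, norm_ne_zero_iff.mpr (znz n), z_eq n⟩

lemma not_par_one_cand (n : ℕ) : ¬ Par 1 (cand n) := by
  rintro ⟨r, hr, hc⟩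
  apply zeta5_im_ne
  have h := z_eq n
  rw [hc, smul_smul] at h
  have h' := congrArg Complex.im h
  simpa [Complex.smul_im] using h'

lemma cand_par_eq {n m : ℕ} (h : Par (cand n) (cand m)) : n = m := by
  obtain ⟨r, hr, hc⟩ := h
  have h1 : ((m : ℂ) + zeta5) =
      (‖(m : ℂ) + zeta5‖ * r * ‖(n : ℂ) + zeta5‖⁻¹) • ((n : ℂ) + zeta5) := by
    conv_lhs => rw [z_eq m]
    rw [hc]
    unfold cand
    rw [smul_smul, smul_smul]
  set s : ℝ := ‖(m : ℂ) + zeta5‖ * r * ‖(n : ℂ) + zeta5‖⁻¹ with hs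
  have him : zeta5.im = s * zeta5.im := by
    have h' := congrArg Complex.im h1
    simpa [Complex.smul_im] using h'
  have hs1 : s = 1 := by
    have h' : (s - 1) * zeta5.im = 0 := by linear_combination -him
    rcases mul_eq_zero.mp h' with h'' | h''
    · linarith [sub_eq_zero.mp h'']
    · exact absurd h'' zeta5_im_ne
  have hre := congrArg Complex.re h1
  rw [hs1, one_smul] at hre
  simp only [Complex.add_re, Complex.natCast_re] at hre
  have hmn : (m : ℝ) = n := by linarith
  exact_mod_cast hmn.symm

lemma exists_good (E : Set ℂ) (hE : E.Finite) :
    ∃ u : ℂ, ‖u‖ = 1 ∧ IsZ5Direction u ∧ ¬ Par 1 u ∧ ¬ Par zeta5 u ∧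
      ∀ p ∈ E, ∀ q ∈ E, p ≠ q → ¬ Par u (q - p) := by
  classical
  set B : Set ℂ := insert zeta5 {w | ∃ p ∈ E, ∃ q ∈ E, p ≠ q ∧ w = q - p} with hB
  have hBfin : B.Finite := by
    apply Set.Finite.insert
    have hsub : {w | ∃ p ∈ E, ∃ q ∈ E, p ≠ q ∧ w = q - p} ⊆
        (fun pq : ℂ × ℂ => pq.2 - pq.1) '' (E ×ˢ E) := by
      rintro w ⟨p, hp, q, hq, _, rfl⟩
      exact ⟨(p, q), ⟨hp, hq⟩, rfl⟩
    exact ((hE.prod hE).image _).subset hsub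
  have hbadfin : {n : ℕ | ∃ b ∈ B, Par (cand n) b}.Finite := by
    have hsub : {n : ℕ | ∃ b ∈ B, Par (cand n) b} ⊆ ⋃ b ∈ B, {n | Par (cand n) b} := by
      rintro n ⟨b, hb, h⟩
      exact Set.mem_biUnion hb h
    refine (Set.Finite.biUnion hBfin fun b _ => ?_).subset hsub
    apply Set.Subsingleton.finite
    intro n hn m hm
    exact cand_par_eq (par_trans hn (par_symm hm))
  obtain ⟨n, hn⟩ := hbadfin.infinite_compl.nonempty
  rw [Set.mem_compl_iff, Set.mem_setOf_eq] at hn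
  push_neg at hn
  refine ⟨cand n, norm_cand n, isZ5_cand n, not_par_one_cand n, ?_, ?_⟩
  · intro h
    exact hn zeta5 (Set.mem_insert _ _) (par_symm h)
  · intro p hp q hq hpq h
    exact hn (q - p) (Set.mem_insert_of_mem _ ⟨p, hp, q, hq, hpq, rfl⟩) h

/-- An adaptively chosen good third direction for the set E of grid points. -/
noncomputable def goodDir (E : Set ℂ) : ℂ :=
  open Classical in
  if h : ∃ u : ℂ, ‖u‖ = 1 ∧ IsZ5Direction u ∧ ¬ Par 1 u ∧ ¬ Par zeta5 u ∧
      ∀ p ∈ E, ∀ q ∈ E, p ≠ q → ¬ Par u (q - p) then h.choose else 1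

lemma goodDir_spec {E : Set ℂ} (hE : E.Finite) :
    ‖goodDir E‖ = 1 ∧ IsZ5Direction (goodDir E) ∧ ¬ Par 1 (goodDir E) ∧
      ¬ Par zeta5 (goodDir E) ∧
      ∀ p ∈ E, ∀ q ∈ E, p ≠ q → ¬ Par (goodDir E) (q - p) := by
  have h := exists_good E hE
  rw [goodDir, dif_pos h]
  exact h.choose_spec

end Aux

theorem union_successively_determined_by_three_xrays :
    ∃ u₁ : ℂ, ‖u₁‖ = 1 ∧ IsZ5Direction u₁ ∧
      ∃ f₂ : (ℂ → ℕ) → ℂ, ∃ f₃ : (ℂ → ℕ) × (ℂ → ℕ) → ℂ,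
        ∀ F : Set ℂ, (∃ Λ : Set ℂ, IsPMS Λ ∧ F ⊆ Λ) → F.Finite →
          let u₂ := f₂ (Xray u₁ F)
          let u₃ := f₃ (Xray u₁ F, Xray u₂ F)
          ‖u₂‖ = 1 ∧ IsZ5Direction u₂ ∧ ¬ Par u₁ u₂ ∧
          ‖u₃‖ = 1 ∧ IsZ5Direction u₃ ∧ ¬ Par u₁ u₃ ∧ ¬ Par u₂ u₃ ∧
          ∀ F' : Set ℂ, (∃ Λ' : Set ℂ, IsPMS Λ' ∧ F' ⊆ Λ') → F'.Finite →
            Xray u₁ F' = Xray u₁ F → Xray u₂ F' = Xray u₂ F → Xray u₃ F' = Xray u₃ F →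
            F' = F := by
  classical
  refine ⟨1, norm_one,
    ⟨1, ⟨![1, 0, 0, 0], by simp [Fin.sum_univ_four]⟩, one_ne_zero,
      ⟨1, one_ne_zero, (one_smul ℝ (1 : ℂ)).symm⟩⟩,
    fun _ => zeta5, fun g => goodDir {p | g.1 p ≠ 0 ∧ g.2 p ≠ 0}, ?_⟩
  intro F _ hFfin
  dsimp only
  set E : Set ℂ := {p | Xray 1 F p ≠ 0 ∧ Xray zeta5 F p ≠ 0} with hEdef
  have hnp : ¬ Par 1 zeta5 := not_par_one_zeta5
  have hEfin : E.Finite := by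
    have hsub : E ⊆ ⋃ x ∈ F, ⋃ y ∈ F, (line 1 x ∩ line zeta5 y) := by
      rintro p ⟨h1, h2⟩
      obtain ⟨x, hxF, hx⟩ := (xray_ne_zero_iff hFfin 1 p).mp h1
      obtain ⟨y, hyF, hy⟩ := (xray_ne_zero_iff hFfin zeta5 p).mp h2
      exact Set.mem_biUnion hxF (Set.mem_biUnion hyF ⟨line_symm hx, line_symm hy⟩)
    refine (Set.Finite.biUnion hFfin fun x _ =>
      Set.Finite.biUnion hFfin fun y _ => ?_).subset hsub
    exact (line_inter_subsingleton one_ne_zero hnp x y).finite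
  obtain ⟨hn3, hz3, hp13, hpz3, hsep⟩ := goodDir_spec hEfin
  set u₃ : ℂ := goodDir E with hu3
  refine ⟨norm_zeta5, ⟨zeta5, ⟨![0, 1, 0, 0], by simp [Fin.sum_univ_four]⟩, zeta5_ne_zero,
    ⟨1, one_ne_zero, (one_smul ℝ zeta5).symm⟩⟩, hnp, hn3, hz3, hp13, hpz3, ?_⟩
  intro F' _ hF'fin hX1 hX2 hX3
  have hFE : F ⊆ E := fun p hp =>
    ⟨(xray_ne_zero_iff hFfin 1 p).mpr ⟨p, hp, mem_line_self _ _⟩,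
     (xray_ne_zero_iff hFfin zeta5 p).mpr ⟨p, hp, mem_line_self _ _⟩⟩
  have hF'E : F' ⊆ E := by
    intro p hp
    constructor
    · rw [← hX1]
      exact (xray_ne_zero_iff hF'fin 1 p).mpr ⟨p, hp, mem_line_self _ _⟩
    · rw [← hX2]
      exact (xray_ne_zero_iff hF'fin zeta5 p).mpr ⟨p, hp, mem_line_self _ _⟩
  have key : ∀ G : Set ℂ, G.Finite → G ⊆ E → ∀ p ∈ E, (p ∈ G ↔ Xray u₃ G p ≠ 0) := by
    intro G hGfin hGE p hpE
    constructor
    · intro hp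
      exact (xray_ne_zero_iff hGfin u₃ p).mpr ⟨p, hp, mem_line_self _ _⟩
    · intro h
      obtain ⟨x, hxG, hxl⟩ := (xray_ne_zero_iff hGfin u₃ p).mp h
      by_cases hxp : x = p
      · rwa [← hxp]
      · exfalso
        obtain ⟨t, ht⟩ := hxl
        have ht0 : t ≠ 0 := by
          rintro rfl
          rw [zero_smul, add_zero] at ht
          exact hxp ht
        exact hsep p hpE x (hGE hxG) (fun h' => hxp h'.symm)
          ⟨t, ht0, by rw [ht, add_sub_cancel_left]⟩
  ext p
  constructor
  · intro hp
    have hpE := hF'E hp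
    have h1 := (key F' hF'fin hF'E p hpE).mp hp
    rw [hX3] at h1
    exact (key F hFfin hFE p hpE).mpr h1
  · intro hp
    have hpE := hFE hp
    have h1 := (key F hFfin hFE p hpE).mp hp
    rw [← hX3] at h1
    exact (key F' hF'fin hF'E p hpE).mpr h1

end
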